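/- For every H ∈ (0,1), ∫₀^∞ (1 − cos x) / x^{2H+1} dx = π / (2 Γ(2H + 1) sin(πH)), where Γ denotes the Gamma function. -/

import Mathlib

open Real MeasureTheory Set Filter

section Aux

/-- Tendsto of `exp (-(x*t))` to 0. -/
private lemma aux_expt_tendsto {t : ℝ} (ht : 0 < t) :
    Tendsto (fun x : ℝ => Real.exp (-(x*t))) atTop (nhds 0) := by
  have h1 : Tendsto (fun x : ℝ => -(x*t)) atTop atBot :=
    Filter.tendsto_neg_atTop_atBot.comp (Filter.tendsto_id.atTop_mul_const ht)
  exact Real.tendsto_exp_atBot.comp h1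

/-- `∫₀^∞ (1-cos x) e^{-tx} dx = 1/(t(1+t²))`, with integrability. -/
private lemma aux_lemA {t : ℝ} (ht : 0 < t) :
    IntegrableOn (fun x => (1 - Real.cos x) * Real.exp (-(x*t))) (Set.Ioi 0) ∧
      ∫ x in Set.Ioi (0:ℝ), (1 - Real.cos x) * Real.exp (-(x*t)) = 1/(t*(1+t^2)) := by
  have ht2 : (0:ℝ) < 1 + t^2 := by positivity
  set g : ℝ → ℝ := fun x =>
    -(1/t) * Real.exp (-(x*t)) - Real.exp (-(x*t)) * (Real.sin x - t * Real.cos x) / (1+t^2) with hg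
  have hderiv : ∀ x : ℝ, HasDerivAt g ((1 - Real.cos x) * Real.exp (-(x*t))) x := by
    intro x
    have hlin : HasDerivAt (fun x : ℝ => -(x*t)) (-t) x := by
      have := ((hasDerivAt_id' x).mul_const t).neg; rw [one_mul] at this; exact this
    have hexp : HasDerivAt (fun x : ℝ => Real.exp (-(x*t)))
        (Real.exp (-(x*t)) * (-t)) x := (Real.hasDerivAt_exp _).comp x hlin
    have hsc : HasDerivAt (fun x : ℝ => Real.sin x - t * Real.cos x)
        (Real.cos x + t * Real.sin x) x := by
      have := (Real.hasDerivAt_sin x).sub ((Real.hasDerivAt_cos x).const_mul t)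
      exact this.congr_deriv (by ring)
    have := ((hexp.const_mul (-(1/t))).sub (((hexp.mul hsc).div_const (1+t^2))))
    refine this.congr_deriv ?_
    field_simp
    ring
  have htend : Tendsto g atTop (nhds 0) := by
    have hexp0 : Tendsto (fun x : ℝ => Real.exp (-(x*t))) atTop (nhds 0) := aux_expt_tendsto ht
    have hb : ∀ x : ℝ, ‖g x‖ ≤ Real.exp (-(x*t)) * (1/t + (1+t)/(1+t^2)) := by
      intro x
      have he : 0 < Real.exp (-(x*t)) := Real.exp_pos _
      have hs : |Real.sin x - t * Real.cos x| ≤ 1 + t := by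
        calc |Real.sin x - t * Real.cos x| ≤ |Real.sin x| + |t * Real.cos x| := abs_sub _ _
        _ ≤ 1 + t := by
            have := Real.abs_sin_le_one x
            have h2 : |t * Real.cos x| ≤ t := by
              rw [abs_mul, abs_of_pos ht]
              nlinarith [Real.abs_cos_le_one x, abs_nonneg (Real.cos x)]
            linarith
      have : ‖g x‖ ≤ ‖-(1/t) * Real.exp (-(x*t))‖ +
          ‖Real.exp (-(x*t)) * (Real.sin x - t * Real.cos x) / (1+t^2)‖ := norm_sub_le _ _
      simp only [Real.norm_eq_abs] at this ⊢
      have h1 : |(-(1/t)) * Real.exp (-(x*t))| = Real.exp (-(x*t)) * (1/t) := by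
        rw [abs_mul, abs_neg, abs_of_pos (by positivity : (0:ℝ) < 1/t),
          abs_of_pos he]; ring
      have h2 : |Real.exp (-(x*t)) * (Real.sin x - t * Real.cos x) / (1+t^2)|
          ≤ Real.exp (-(x*t)) * ((1+t)/(1+t^2)) := by
        rw [abs_div, abs_mul, abs_of_pos he, abs_of_pos ht2]
        rw [div_le_iff₀ ht2]
        calc Real.exp (-(x*t)) * |Real.sin x - t * Real.cos x|
            ≤ Real.exp (-(x*t)) * (1+t) := by
              exact mul_le_mul_of_nonneg_left hs he.le
        _ = Real.exp (-(x*t)) * ((1+t)/(1+t^2)) * (1+t^2) := by field_simp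
      calc |g x| ≤ _ := this
      _ ≤ Real.exp (-(x*t)) * (1/t) + Real.exp (-(x*t)) * ((1+t)/(1+t^2)) := by
          rw [h1]; exact add_le_add le_rfl h2
      _ = Real.exp (-(x*t)) * (1/t + (1+t)/(1+t^2)) := by ring
    have : Tendsto (fun x : ℝ => Real.exp (-(x*t)) * (1/t + (1+t)/(1+t^2))) atTop (nhds 0) := by
      simpa using hexp0.mul_const (1/t + (1+t)/(1+t^2))
    exact squeeze_zero_norm hb this
  have hpos : ∀ x ∈ Set.Ioi (0:ℝ), 0 ≤ (1 - Real.cos x) * Real.exp (-(x*t)) := by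
    intro x _
    have := Real.cos_le_one x
    exact mul_nonneg (by linarith) (Real.exp_pos _).le
  have hcont : ContinuousWithinAt g (Set.Ici 0) 0 := (hderiv 0).continuousAt.continuousWithinAt
  have hder' : ∀ x ∈ Set.Ioi (0:ℝ), HasDerivAt g ((1 - Real.cos x) * Real.exp (-(x*t))) x :=
    fun x _ => hderiv x
  refine ⟨integrableOn_Ioi_deriv_of_nonneg hcont hder' hpos htend, ?_⟩
  rw [integral_Ioi_of_hasDerivAt_of_nonneg hcont hder' hpos htend]
  simp only [hg]
  rw [Real.sin_zero, Real.cos_zero]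
  simp only [mul_zero, zero_sub, zero_mul, neg_zero, Real.exp_zero]
  field_simp
  ring

/-- `∫₀^∞ e^{-cs} ds = 1/c`, with integrability. -/
private lemma aux_lemExp {c : ℝ} (hc : 0 < c) :
    IntegrableOn (fun s : ℝ => Real.exp (-(c*s))) (Set.Ioi 0) ∧
      ∫ s in Set.Ioi (0:ℝ), Real.exp (-(c*s)) = 1/c := by
  constructor
  · simpa [neg_mul] using exp_neg_integrableOn_Ioi 0 hc
  · have := integral_rpow_mul_exp_neg_mul_Ioi (one_pos) hc
    simp only [sub_self, Real.rpow_zero, one_mul, Real.rpow_one, Real.Gamma_one, mul_one] at this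
    exact this

/-- `∫₀^∞ t^a e^{-xt} dt = Γ(a+1)/x^{a+1}`, with integrability. -/
private lemma aux_lemB {x a : ℝ} (hx : 0 < x) (ha : 0 < a) :
    IntegrableOn (fun t : ℝ => t ^ a * Real.exp (-(x*t))) (Set.Ioi 0) ∧
      ∫ t in Set.Ioi (0:ℝ), t ^ a * Real.exp (-(x*t))
        = Real.Gamma (a+1) / x ^ (a+1) := by
  constructor
  · have := integrableOn_rpow_mul_exp_neg_mul_rpow (p := 1) (s := a) (b := x)
      (by linarith) one_pos hx
    refine this.congr_fun (fun t ht => ?_) measurableSet_Ioi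
    dsimp only
    rw [Real.rpow_one, neg_mul]
  · have := integral_rpow_mul_exp_neg_mul_Ioi (by linarith : (0:ℝ) < a + 1) hx
    rw [show a + 1 - 1 = a by ring] at this
    rw [this, one_div, Real.inv_rpow hx.le, inv_mul_eq_div]

/-- `∫₀^∞ t^{a-1} e^{-s t²} dt = s^{-a/2}·(1/2)·Γ(a/2)`, with integrability. -/
private lemma aux_lemC {s a : ℝ} (hs : 0 < s) (ha : 0 < a) :
    IntegrableOn (fun t : ℝ => t ^ (a-1) * Real.exp (-s * t ^ (2:ℝ))) (Set.Ioi 0) ∧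
      ∫ t in Set.Ioi (0:ℝ), t ^ (a-1) * Real.exp (-s * t ^ (2:ℝ))
        = s ^ (-(a/2)) * (1/2) * Real.Gamma (a/2) := by
  constructor
  · exact integrableOn_rpow_mul_exp_neg_mul_rpow (by linarith) two_pos hs
  · have := integral_rpow_mul_exp_neg_mul_rpow (p := 2) (q := a - 1) (b := s)
      two_pos (by linarith) hs
    rw [this]
    rw [show a - 1 + 1 = a by ring]
    norm_num [neg_div]

/-- `∫₀^∞ e^{-s} s^{b-1} ds = Γ b`, with integrability. -/
private lemma aux_lemGamma {b : ℝ} (hb : 0 < b) :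
    IntegrableOn (fun s : ℝ => Real.exp (-s) * s ^ (b-1)) (Set.Ioi 0) ∧
      ∫ s in Set.Ioi (0:ℝ), Real.exp (-s) * s ^ (b-1) = Real.Gamma b :=
  ⟨Real.GammaIntegral_convergent hb, (Real.Gamma_eq_integral hb).symm⟩

/-- turn a nonneg Bochner evaluation into a lintegral evaluation -/
private lemma aux_toLintegral {f : ℝ → ℝ} {c : ℝ}
    (hint : IntegrableOn f (Set.Ioi 0)) (hval : ∫ x in Set.Ioi (0:ℝ), f x = c)
    (hnn : ∀ x ∈ Set.Ioi (0:ℝ), 0 ≤ f x) :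
    ∫⁻ x in Set.Ioi (0:ℝ), ENNReal.ofReal (f x) = ENNReal.ofReal c := by
  rw [← hval, ← ofReal_integral_eq_lintegral_ofReal hint]
  exact (ae_restrict_iff' measurableSet_Ioi).2 (Filter.Eventually.of_forall hnn)

end Aux

/-- `∫₀^∞ (1 - cos x) / x^(2H+1) dx = π / (2 Γ(2H+1) sin(πH))` for `H ∈ (0,1)`. -/
theorem harmonizable_constant (H : ℝ) (hH : H ∈ Set.Ioo (0:ℝ) 1) :
    (∫ x in Set.Ioi (0:ℝ), (1 - Real.cos x) / x ^ (2*H + 1)) =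
      π / (2 * Real.Gamma (2*H + 1) * Real.sin (π * H)) := by
  obtain ⟨h0, h1⟩ := hH
  have hπ := Real.pi_pos
  have hsin : 0 < Real.sin (π * H) :=
    Real.sin_pos_of_pos_of_lt_pi (by positivity) (by nlinarith)
  have hGa : 0 < Real.Gamma (2*H+1) := Real.Gamma_pos_of_pos (by linarith)
  have hR : 0 ≤ π / (2 * Real.Gamma (2*H + 1) * Real.sin (π * H)) := by positivity
  -- the two kernels
  set F : ℝ → ℝ → ENNReal := fun x t =>
    ENNReal.ofReal ((1 - Real.cos x) * (t ^ (2*H) * Real.exp (-(x*t)))) with hF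
  set G : ℝ → ℝ → ENNReal := fun t s =>
    ENNReal.ofReal (t ^ (2*H-1) * Real.exp (-((1+t^2)*s))) with hG
  have hFmeas : Measurable (Function.uncurry F) := by
    apply Measurable.ennreal_ofReal
    fun_prop
  have hGmeas : Measurable (Function.uncurry G) := by
    apply Measurable.ennreal_ofReal
    fun_prop
  -- Step 1: pointwise identity for the inner t-integral
  have e1 : ∀ x ∈ Set.Ioi (0:ℝ),
      (∫⁻ t in Set.Ioi (0:ℝ), F x t)
        = ENNReal.ofReal (1 - Real.cos x) * ENNReal.ofReal (Real.Gamma (2*H+1) / x ^ (2*H+1)) := by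
    intro x hx
    have hx0 : (0:ℝ) < x := hx
    have hcx : 0 ≤ 1 - Real.cos x := by linarith [Real.cos_le_one x]
    have hmul : ∀ t : ℝ, F x t
        = ENNReal.ofReal (1 - Real.cos x) * ENNReal.ofReal (t ^ (2*H) * Real.exp (-(x*t))) := by
      intro t; rw [hF]; exact ENNReal.ofReal_mul hcx
    simp only [hmul]
    rw [lintegral_const_mul'' _ (by fun_prop : Measurable
        (fun t : ℝ => ENNReal.ofReal (t ^ (2*H) * Real.exp (-(x*t))))).aemeasurable]
    obtain ⟨hBint, hBval⟩ := aux_lemB hx0 (by linarith : (0:ℝ) < 2*H)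
    rw [aux_toLintegral hBint hBval (fun t ht => by
      have : (0:ℝ) < t := ht
      positivity)]
  -- Step 2: pointwise identity for the inner x-integral (after swap)
  have e3 : ∀ t ∈ Set.Ioi (0:ℝ),
      (∫⁻ x in Set.Ioi (0:ℝ), F x t) = ENNReal.ofReal (t ^ (2*H-1) / (1+t^2)) := by
    intro t htt
    have ht0 : (0:ℝ) < t := htt
    have hrw : ∀ x : ℝ, F x t
        = ENNReal.ofReal (t ^ (2*H)) * ENNReal.ofReal ((1 - Real.cos x) * Real.exp (-(x*t))) := by
      intro x
      rw [hF, ← ENNReal.ofReal_mul (by positivity : (0:ℝ) ≤ t ^ (2*H))]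
      ring_nf
    simp only [hrw]
    rw [lintegral_const_mul'' _ (by fun_prop : Measurable
        (fun x : ℝ => ENNReal.ofReal ((1 - Real.cos x) * Real.exp (-(x*t))))).aemeasurable]
    obtain ⟨hAint, hAval⟩ := aux_lemA ht0
    rw [aux_toLintegral hAint hAval (fun x hx => by
      have := Real.cos_le_one x
      exact mul_nonneg (by linarith) (Real.exp_pos _).le)]
    rw [← ENNReal.ofReal_mul (by positivity : (0:ℝ) ≤ t ^ (2*H))]
    congr 1
    rw [show 2*H - 1 = 2*H - 1 from rfl, Real.rpow_sub ht0, Real.rpow_one]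
    field_simp
  -- Step 3: second kernel: for t > 0, t^{2H-1}/(1+t²) = ∫⁻ s, G t s
  have e4 : ∀ t ∈ Set.Ioi (0:ℝ),
      ENNReal.ofReal (t ^ (2*H-1) / (1+t^2)) = ∫⁻ s in Set.Ioi (0:ℝ), G t s := by
    intro t htt
    have ht0 : (0:ℝ) < t := htt
    have ht2 : (0:ℝ) < 1 + t^2 := by positivity
    have hrw : ∀ s : ℝ, G t s
        = ENNReal.ofReal (t ^ (2*H-1)) * ENNReal.ofReal (Real.exp (-((1+t^2)*s))) := by
      intro s
      rw [hG, ← ENNReal.ofReal_mul (by positivity : (0:ℝ) ≤ t ^ (2*H-1))]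
    simp only [hrw]
    rw [lintegral_const_mul'' _ (by fun_prop : Measurable
        (fun s : ℝ => ENNReal.ofReal (Real.exp (-((1+t^2)*s))))).aemeasurable]
    obtain ⟨hEint, hEval⟩ := aux_lemExp ht2
    rw [aux_toLintegral hEint hEval (fun s hs => (Real.exp_pos _).le)]
    rw [← ENNReal.ofReal_mul (by positivity : (0:ℝ) ≤ t ^ (2*H-1))]
    rw [mul_one_div]
  -- Step 4: inner t-integral of G, for s > 0
  have e6 : ∀ s ∈ Set.Ioi (0:ℝ),
      (∫⁻ t in Set.Ioi (0:ℝ), G t s)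
        = ENNReal.ofReal (Real.Gamma H / 2)
          * ENNReal.ofReal (Real.exp (-s) * s ^ ((1-H)-1)) := by
    intro s hss
    have hs0 : (0:ℝ) < s := hss
    have hrw : ∀ t : ℝ, G t s
        = ENNReal.ofReal (Real.exp (-s))
          * ENNReal.ofReal (t ^ (2*H-1) * Real.exp (-s * t ^ (2:ℝ))) := by
      intro t
      simp only [hG]
      rw [← ENNReal.ofReal_mul (Real.exp_pos _).le]
      congr 1
      have : -((1+t^2)*s) = -s + (-s * t ^ (2:ℝ)) := by
        rw [show t ^ (2:ℝ) = t ^ (2:ℕ) by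
          rw [← Real.rpow_natCast t 2]; norm_num]
        ring
      rw [this, Real.exp_add]
      ring
    simp only [hrw]
    rw [lintegral_const_mul'' _ (by fun_prop : Measurable
        (fun t : ℝ => ENNReal.ofReal (t ^ (2*H-1) * Real.exp (-s * t ^ (2:ℝ))))).aemeasurable]
    obtain ⟨hCint, hCval⟩ := aux_lemC hs0 (by linarith : (0:ℝ) < 2*H)
    rw [show 2*H/2 = H by ring] at hCval
    rw [aux_toLintegral hCint hCval (fun t ht => by
      have : (0:ℝ) < t := ht
      positivity)]
    rw [← ENNReal.ofReal_mul (Real.exp_pos _).le,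
        ← ENNReal.ofReal_mul (by positivity : (0:ℝ) ≤ Real.Gamma H / 2)]
    congr 1
    rw [show (1-H)-1 = -(2*H/2) by ring]
    ring
  -- Now assemble the chain of lintegral identities
  have hcx_meas : Measurable (fun x : ℝ => (1 - Real.cos x) / x ^ (2*H+1)) := by fun_prop
  have key : (∫⁻ x in Set.Ioi (0:ℝ), ENNReal.ofReal ((1 - Real.cos x) / x ^ (2*H+1)))
      = ENNReal.ofReal (π / (2 * Real.Gamma (2*H + 1) * Real.sin (π * H))) := by
    have hstep1 : (∫⁻ x in Set.Ioi (0:ℝ), ENNReal.ofReal ((1 - Real.cos x) / x ^ (2*H+1)))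
        = ∫⁻ x in Set.Ioi (0:ℝ), ENNReal.ofReal (Real.Gamma (2*H+1))⁻¹
            * ∫⁻ t in Set.Ioi (0:ℝ), F x t := by
      refine setLIntegral_congr_fun measurableSet_Ioi ?_
      intro x hx
      beta_reduce
      have hx0 : (0:ℝ) < x := hx
      have hcx : 0 ≤ 1 - Real.cos x := by linarith [Real.cos_le_one x]
      rw [e1 x hx, ← ENNReal.ofReal_mul hcx, ← ENNReal.ofReal_mul (by positivity)]
      congr 1
      field_simp
    rw [hstep1]
    have hinner : Measurable fun x : ℝ => ∫⁻ t in Set.Ioi (0:ℝ), F x t :=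
      hFmeas.lintegral_prod_right'
    rw [lintegral_const_mul'' _ hinner.aemeasurable]
    have hswap : (∫⁻ x in Set.Ioi (0:ℝ), ∫⁻ t in Set.Ioi (0:ℝ), F x t)
        = ∫⁻ t in Set.Ioi (0:ℝ), ∫⁻ x in Set.Ioi (0:ℝ), F x t :=
      lintegral_lintegral_swap hFmeas.aemeasurable
    rw [hswap]
    have hstep3 : (∫⁻ t in Set.Ioi (0:ℝ), ∫⁻ x in Set.Ioi (0:ℝ), F x t)
        = ∫⁻ t in Set.Ioi (0:ℝ), ∫⁻ s in Set.Ioi (0:ℝ), G t s := by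
      refine setLIntegral_congr_fun measurableSet_Ioi ?_
      intro t ht
      beta_reduce
      rw [e3 t ht, e4 t ht]
    rw [hstep3]
    have hswap2 : (∫⁻ t in Set.Ioi (0:ℝ), ∫⁻ s in Set.Ioi (0:ℝ), G t s)
        = ∫⁻ s in Set.Ioi (0:ℝ), ∫⁻ t in Set.Ioi (0:ℝ), G t s :=
      lintegral_lintegral_swap hGmeas.aemeasurable
    rw [hswap2]
    have hstep6 : (∫⁻ s in Set.Ioi (0:ℝ), ∫⁻ t in Set.Ioi (0:ℝ), G t s)
        = ENNReal.ofReal (Real.Gamma H / 2)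
            * ∫⁻ s in Set.Ioi (0:ℝ), ENNReal.ofReal (Real.exp (-s) * s ^ ((1-H)-1)) := by
      rw [← lintegral_const_mul'' _ (by fun_prop : Measurable
          (fun s : ℝ => ENNReal.ofReal (Real.exp (-s) * s ^ ((1-H)-1)))).aemeasurable]
      exact setLIntegral_congr_fun measurableSet_Ioi
        (fun s hs => e6 s hs)
    rw [hstep6]
    obtain ⟨hGint, hGval⟩ := aux_lemGamma (by linarith : (0:ℝ) < 1 - H)
    rw [aux_toLintegral hGint hGval (fun s hs => by
      have : (0:ℝ) < s := hs
      positivity)]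
    rw [← ENNReal.ofReal_mul (by positivity : (0:ℝ) ≤ Real.Gamma H / 2),
        ← ENNReal.ofReal_mul (by positivity : (0:ℝ) ≤ (Real.Gamma (2*H+1))⁻¹)]
    congr 1
    have hrefl : Real.Gamma H * Real.Gamma (1 - H) = π / Real.sin (π * H) :=
      Real.Gamma_mul_Gamma_one_sub H
    calc (Real.Gamma (2*H+1))⁻¹ * (Real.Gamma H / 2 * Real.Gamma (1 - H))
        = (Real.Gamma H * Real.Gamma (1 - H)) / (2 * Real.Gamma (2*H+1)) := by ring
      _ = (π / Real.sin (π * H)) / (2 * Real.Gamma (2*H+1)) := by rw [hrefl]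
      _ = π / (2 * Real.Gamma (2*H + 1) * Real.sin (π * H)) := by
          rw [div_div, mul_comm]
  -- conclude
  rw [MeasureTheory.integral_eq_lintegral_of_nonneg_ae ?hnn ?hmeas, key,
    ENNReal.toReal_ofReal hR]
  case hnn =>
    refine (ae_restrict_iff' measurableSet_Ioi).2 (Filter.Eventually.of_forall ?_)
    intro x hx
    have hx0 : (0:ℝ) < x := hx
    have := Real.cos_le_one x
    exact div_nonneg (by linarith) (Real.rpow_nonneg hx0.le _)
  case hmeas => exact hcx_meas.aestronglyMeasurable
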